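/- Schlessinger's pullback freeness lemma: let R''' = R' ×_R R'' be the pullback (fiber product) of surjections of commutative Artinian local rings θ' : R' → R and θ'' : R'' → R with θ'' surjective. If M' is a free R'-module of finite rank n, M'' is a free R''-module of rank n, and there is an isomorphism R ⊗_{R'} M' ≅ R ⊗_{R''} M'' of R-modules, then the fiber product module M''' = M' ×_{(R⊗M')} M'' is a free R'''-module of rank n. -/

import Mathlib

/-!
STATEMENT 7: Schlessinger's pullback freeness lemma.
`R''' = R' ×_R R''` is the fiber product of local homomorphisms `θ' : R' → R`,
`θ'' : R'' → R` of commutative Artinian local rings with `θ''` surjective (here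
`θ' = algebraMap R' R`, `θ'' = algebraMap R'' R`).  If `M'` is free of rank `n` over
`R'`, `M''` is free of rank `n` over `R''`, and `τ : R ⊗_{R'} M' ≅ R ⊗_{R''} M''`
is an `R`-module isomorphism, then the fiber product module
`M''' = M' ×_{R ⊗ M'} M''` is a free `R'''`-module of rank `n`.
-/

open scoped TensorProduct
set_option synthInstance.maxHeartbeats 1000000
set_option maxHeartbeats 2000000

section

variable (R R' R'' : Type*) [CommRing R] [CommRing R'] [CommRing R'']
  [IsArtinianRing R] [IsLocalRing R] [IsArtinianRing R'] [IsLocalRing R']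
  [IsArtinianRing R''] [IsLocalRing R'']
  [Algebra R' R] [Algebra R'' R]
  (M' M'' : Type*) [AddCommGroup M'] [Module R' M'] [AddCommGroup M''] [Module R'' M'']

/-- The fiber product ring `R''' = R' ×_R R''`, as a subring of `R' × R''`. -/
def fiberRing : Subring (R' × R'') :=
  RingHom.eqLocus ((algebraMap R' R).comp (RingHom.fst R' R''))
    ((algebraMap R'' R).comp (RingHom.snd R' R''))

/-- `M'` as a module over `R' × R''` via the first projection. -/
noncomputable instance : Module (R' × R'') M' := Module.compHom M' (RingHom.fst R' R'')

/-- `M''` as a module over `R' × R''` via the second projection. -/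
noncomputable instance : Module (R' × R'') M'' := Module.compHom M'' (RingHom.snd R' R'')

/-- `M' × M''` as a module over the fiber product ring `R'''`. -/
noncomputable instance : Module (fiberRing R R' R'') (M' × M'') :=
  Module.compHom _ (fiberRing R R' R'').subtype

theorem schlessinger_pullback_freeness (n : ℕ)
    (hθ'' : Function.Surjective (algebraMap R'' R))
    (b' : Module.Basis (Fin n) R' M') (b'' : Module.Basis (Fin n) R'' M'')
    (τ : (R ⊗[R'] M') ≃ₗ[R] (R ⊗[R''] M'')) :
    ∃ M''' : Submodule (fiberRing R R' R'') (M' × M''),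
      (∀ p : M' × M'', p ∈ M''' ↔ τ ((1 : R) ⊗ₜ[R'] p.1) = (1 : R) ⊗ₜ[R''] p.2) ∧
      Nonempty (Module.Basis (Fin n) (fiberRing R R' R'') M''') := by
  classical
  have hloc : IsLocalHom (algebraMap R'' R) := IsLocalHom.of_surjective (algebraMap R'' R) hθ''
  set b'R : Module.Basis (Fin n) R (R ⊗[R'] M') := b'.baseChange R with hb'R
  set b''R : Module.Basis (Fin n) R (R ⊗[R''] M'') := b''.baseChange R with hb''R
  set d : Module.Basis (Fin n) R (R ⊗[R''] M'') := b'R.map τ with hd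
  set A : Matrix (Fin n) (Fin n) R := b''R.toMatrix d with hA
  have hAinv : IsUnit A.det := by
    have := b''R.invertibleToMatrix d
    exact Matrix.isUnit_det_of_invertible A
  set B : Matrix (Fin n) (Fin n) R'' := fun i j => (hθ'' (A i j)).choose with hBdef
  have hB : ∀ i j, algebraMap R'' R (B i j) = A i j := fun i j => (hθ'' (A i j)).choose_spec
  have hmap : B.map (algebraMap R'' R) = A := by ext i j; exact hB i j
  have hBdet : IsUnit B.det := by
    refine hloc.map_nonunit B.det ?_
    rw [RingHom.map_det, RingHom.mapMatrix_apply, hmap]; exact hAinv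
  set c'' : Module.Basis (Fin n) R'' M'' := b''.map (Matrix.toLinearEquiv b'' B hBdet) with hc''def
  have hc : ∀ j, c'' j = ∑ i, B i j • b'' i := by
    intro j
    simp [hc''def, Matrix.toLinearEquiv, Matrix.toLin_self]
  have key : ∀ j, τ ((1:R) ⊗ₜ[R'] b' j) = (1:R) ⊗ₜ[R''] c'' j := by
    intro j
    have h1 : (1:R) ⊗ₜ[R''] c'' j = ∑ i, A i j • b''R i := by
      rw [hc j, TensorProduct.tmul_sum]
      refine Finset.sum_congr rfl fun i _ => ?_
      rw [show (b''R i : R ⊗[R''] M'') = (1:R) ⊗ₜ[R''] b'' i from by simp [hb''R],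
        TensorProduct.tmul_smul, ← hB i j, algebraMap_smul]
    rw [h1]
    have h2 : d j = ∑ i, A i j • b''R i := (b''R.sum_toMatrix_smul_self d j).symm
    have h3 : d j = τ ((1:R) ⊗ₜ[R'] b' j) := by
      simp [hd, hb'R]
    rw [← h2, ← h3]
  -- base-changed basis of c''
  set c''R : Module.Basis (Fin n) R (R ⊗[R''] M'') := c''.baseChange R with hc''R
  have hc''Rapp : ∀ i, (c''R i : R ⊗[R''] M'') = (1:R) ⊗ₜ[R''] c'' i := by
    intro i; simp [hc''R]
  have hL : ∀ m : M', τ ((1:R) ⊗ₜ[R'] m)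
      = ∑ i, algebraMap R' R (b'.repr m i) • c''R i := by
    intro m
    conv_lhs => rw [← b'.sum_repr m]
    rw [TensorProduct.tmul_sum, map_sum]
    refine Finset.sum_congr rfl fun i _ => ?_
    rw [TensorProduct.tmul_smul, ← algebraMap_smul R (b'.repr m i) ((1:R) ⊗ₜ[R'] b' i),
      map_smul, key i, hc''Rapp i]
  have hRr : ∀ m : M'', (1:R) ⊗ₜ[R''] m
      = ∑ i, algebraMap R'' R (c''.repr m i) • c''R i := by
    intro m
    conv_lhs => rw [← c''.sum_repr m]
    rw [TensorProduct.tmul_sum]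
    refine Finset.sum_congr rfl fun i _ => ?_
    rw [TensorProduct.tmul_smul, ← algebraMap_smul R (c''.repr m i) ((1:R) ⊗ₜ[R''] c'' i),
      hc''Rapp i]
  have hchar : ∀ (m : M') (m2 : M''),
      τ ((1:R) ⊗ₜ[R'] m) = (1:R) ⊗ₜ[R''] m2 ↔
        ∀ i, algebraMap R' R (b'.repr m i) = algebraMap R'' R (c''.repr m2 i) := by
    intro m m2
    rw [hL, hRr]
    constructor
    · intro h i
      have h2 := congrArg (fun z => c''R.repr z i) h
      simpa only [Module.Basis.repr_sum_self] using h2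
    · intro h
      exact Finset.sum_congr rfl fun i _ => by rw [h i]
  have hc2 : ∀ c : fiberRing R R' R'',
      algebraMap R' R (c : R' × R'').1 = algebraMap R'' R (c : R' × R'').2 :=
    fun c => c.2
  let M3 : Submodule (fiberRing R R' R'') (M' × M'') :=
    { carrier := {p | τ ((1:R) ⊗ₜ[R'] p.1) = (1:R) ⊗ₜ[R''] p.2}
      add_mem' := by
        intro a b ha hb
        show τ ((1:R) ⊗ₜ[R'] (a.1 + b.1)) = (1:R) ⊗ₜ[R''] (a.2 + b.2)
        rw [TensorProduct.tmul_add, TensorProduct.tmul_add, map_add, ha, hb]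
      zero_mem' := by
        show τ ((1:R) ⊗ₜ[R'] (0 : M')) = (1:R) ⊗ₜ[R''] (0 : M'')
        simp
      smul_mem' := by
        intro c x hx
        show τ ((1:R) ⊗ₜ[R'] ((c : R' × R'').1 • x.1))
          = (1:R) ⊗ₜ[R''] ((c : R' × R'').2 • x.2)
        rw [TensorProduct.tmul_smul, ← algebraMap_smul R (c : R' × R'').1, map_smul, hx,
          hc2 c, algebraMap_smul, ← TensorProduct.tmul_smul] }
  have hmem : ∀ p : M' × M'',
      p ∈ M3 ↔ τ ((1:R) ⊗ₜ[R'] p.1) = (1:R) ⊗ₜ[R''] p.2 := fun p => Iff.rfl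
  refine ⟨M3, hmem, ?_⟩
  let toF : M3 → (Fin n → fiberRing R R' R'') := fun p i =>
    ⟨(b'.repr (p : M' × M'').1 i, c''.repr (p : M' × M'').2 i),
      (hchar _ _).mp ((hmem _).mp p.2) i⟩
  let invF : (Fin n → fiberRing R R' R'') → M3 := fun f =>
    ⟨(∑ i, ((f i : R' × R'')).1 • b' i, ∑ i, ((f i : R' × R'')).2 • c'' i),
      (hmem _).mpr <| (hchar _ _).mpr fun i => by
        simp only [Module.Basis.repr_sum_self]
        exact hc2 (f i)⟩
  refine ⟨Module.Basis.ofEquivFun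
    { toFun := toF, invFun := invF,
      map_add' := ?_, map_smul' := ?_, left_inv := ?_, right_inv := ?_ }⟩
  · intro p q
    funext i
    apply Subtype.ext
    show (b'.repr ((p : M' × M'').1 + (q : M' × M'').1) i,
        c''.repr ((p : M' × M'').2 + (q : M' × M'').2) i) = _
    simp [toF, Prod.ext_iff]
  · intro c p
    funext i
    apply Subtype.ext
    show (b'.repr ((c : R' × R'').1 • (p : M' × M'').1) i,
        c''.repr ((c : R' × R'').2 • (p : M' × M'').2) i) = _
    have h1 : b'.repr ((c : R' × R'').1 • (p : M' × M'').1) i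
        = (c : R' × R'').1 * b'.repr (p : M' × M'').1 i := by
      rw [map_smul]; simp [smul_eq_mul]
    have h2 : c''.repr ((c : R' × R'').2 • (p : M' × M'').2) i
        = (c : R' × R'').2 * c''.repr (p : M' × M'').2 i := by
      rw [map_smul]; simp [smul_eq_mul]
    rw [h1, h2]
    rfl
  · intro p
    apply Subtype.ext
    show (∑ i, b'.repr (p : M' × M'').1 i • b' i,
        ∑ i, c''.repr (p : M' × M'').2 i • c'' i) = (p : M' × M'')
    rw [Module.Basis.sum_repr, Module.Basis.sum_repr]
  · intro f
    funext i
    apply Subtype.ext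
    show (b'.repr (∑ j, ((f j : R' × R'')).1 • b' j) i,
        c''.repr (∑ j, ((f j : R' × R'')).2 • c'' j) i) = (f i : R' × R'')
    simp only [Module.Basis.repr_sum_self]


end
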